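/- Let d be a prime. For each j in ℤ/d, let T_j : (ℤ/d)^d \to (ℤ/d)^d be the CNOT map that replaces coordinate j+1 (mod d) of its argument x by x_{j+1} + x_j (mod d) and leaves all other coordinates unchanged. Then the composition of the d^2 - 1 maps T_0, T_1, \dots, T_{d-1}, T_0, T_1, \dots applied in this cyclic order (gate number t, for t = 1, \dots, d^2-1, being T_{(t-1) mod d}) equals the cyclic coordinate shift S : (ℤ/d)^d \to (ℤ/d)^d given by (S x)_j = x_{j+1 (mod d)}; i.e. the network sends the input (e_0, e_1, \dots, e_{d-1}) to (e_1, e_2, \dots, e_{d-1}, e_0). -/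

import Mathlib

/-- The CNOT map on `(ℤ/d)^d` with control coordinate `j` and target
coordinate `j + 1` (mod `d`): it replaces coordinate `j+1` of `x` by
`x (j+1) + x j` and leaves all other coordinates unchanged. -/
def cnot (d : ℕ) (j : ZMod d) (x : ZMod d → ZMod d) : ZMod d → ZMod d :=
  Function.update x (j + 1) (x (j + 1) + x j)

/-- The network consisting of the first `n` gates, applied in the cyclic
order `T_0, T_1, …, T_{d-1}, T_0, T_1, …` (gate number `t` being
`T_{(t-1) mod d}`). -/
def network (d : ℕ) : ℕ → (ZMod d → ZMod d) → (ZMod d → ZMod d)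
  | 0, x => x
  | n + 1, x => cnot d (n : ZMod d) (network d n x)

/-- Auxiliary sequence: `seqv d x k = x ((k+1) mod d)` for `k < d`, and
`seqv d x k = seqv d x (k-1) + seqv d x (k-d)` for `k ≥ d`. -/
def seqv (d : ℕ) (x : ZMod d → ZMod d) : ℕ → ZMod d
  | k =>
    if h : k < d ∨ d = 0 then x ((k : ZMod d) + 1)
    else seqv d x (k - 1) + seqv d x (k - d)
  termination_by k => k
  decreasing_by all_goals omega

lemma seqv_lt {d : ℕ} (x : ZMod d → ZMod d) {k : ℕ} (h : k < d) :
    seqv d x k = x ((k : ZMod d) + 1) := by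
  rw [seqv]; simp [h]

lemma seqv_ge {d : ℕ} (x : ZMod d → ZMod d) {k : ℕ} (hd : 0 < d) (h : d ≤ k) :
    seqv d x k = seqv d x (k - 1) + seqv d x (k - d) := by
  rw [seqv]
  have : ¬(k < d ∨ d = 0) := by omega
  simp [this]

lemma zmod_val_sub_one {d : ℕ} [NeZero d] {c : ZMod d} (hc : c ≠ 0) :
    (c - 1).val = c.val - 1 := by
  have h1 : 1 ≤ c.val := Nat.pos_of_ne_zero fun h => hc ((ZMod.val_eq_zero c).1 h)
  have h2 : c.val - 1 < d := by
    have := ZMod.val_lt c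
    omega
  have : c - 1 = ((c.val - 1 : ℕ) : ZMod d) := by
    rw [Nat.cast_sub h1, Nat.cast_one, ZMod.natCast_rightInverse c]
  rw [this, ZMod.val_cast_of_lt h2]

lemma network_eq_seqv (d : ℕ) [NeZero d] (x : ZMod d → ZMod d) :
    ∀ n, ∀ j : ZMod d, network d n x j = seqv d x (n + (j - 1 - (n : ZMod d)).val) := by
  have hd : 0 < d := Nat.pos_of_ne_zero (NeZero.ne d)
  intro n
  induction n with
  | zero =>
    intro j
    have hval : (j - 1).val < d := ZMod.val_lt _
    simp only [network, Nat.cast_zero, Nat.zero_add, sub_zero]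
    rw [seqv_lt x hval, ZMod.natCast_rightInverse (j - 1)]
    ring_nf
  | succ n ih =>
    intro j
    have hcast : ((n + 1 : ℕ) : ZMod d) = (n : ZMod d) + 1 := by push_cast; ring
    by_cases hj : j = (n : ZMod d) + 1
    · subst hj
      have h1 : network d (n + 1) x ((n : ZMod d) + 1)
          = network d n x ((n : ZMod d) + 1) + network d n x (n : ZMod d) := by
        simp [network, cnot]
      rw [h1, ih, ih]
      have e1 : ((n : ZMod d) + 1 - 1 - (n : ZMod d)) = 0 := by ring
      have e2 : ((n : ZMod d) - 1 - (n : ZMod d)) = -1 := by ring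
      have e3 : ((n : ZMod d) + 1 - 1 - ((n + 1 : ℕ) : ZMod d)) = -1 := by
        rw [hcast]; ring
      rw [e1, e2, e3]
      have hneg1 : (-1 : ZMod d).val = d - 1 := by
        obtain ⟨m, rfl⟩ := Nat.exists_eq_succ_of_ne_zero (NeZero.ne d)
        exact ZMod.val_neg_one m
      rw [hneg1, ZMod.val_zero, Nat.add_zero]
      have hidx : n + 1 + (d - 1) = n + d := by omega
      rw [hidx]
      have hrhs : seqv d x (n + d) = seqv d x (n + (d - 1)) + seqv d x n := by
        rw [seqv_ge x hd (by omega)]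
        have h2 : n + d - 1 = n + (d - 1) := by omega
        have h3 : n + d - d = n := by omega
        rw [h2, h3]
      rw [hrhs, add_comm]
    · have h1 : network d (n + 1) x j = network d n x j := by
        simp only [network, cnot]
        exact Function.update_of_ne hj _ _
      rw [h1, ih]
      set c : ZMod d := j - 1 - (n : ZMod d) with hc
      have hcne : c ≠ 0 := by
        intro h
        apply hj
        have h' : j - 1 - (n : ZMod d) = 0 := by rw [← hc]; exact h
        linear_combination h'
      have e4 : j - 1 - ((n + 1 : ℕ) : ZMod d) = c - 1 := by
        rw [hcast, hc]; ring
      rw [e4, zmod_val_sub_one hcne]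
      congr 1
      have h1' : 1 ≤ c.val := Nat.pos_of_ne_zero fun h => hcne ((ZMod.val_eq_zero c).1 h)
      omega

open Polynomial in
lemma seqv_period (d : ℕ) (hd : d.Prime) (x : ZMod d → ZMod d) (k : ℕ) :
    seqv d x (d ^ 2 - 1 + k) = seqv d x k := by
  haveI : Fact d.Prime := ⟨hd⟩
  have hd2 : 2 ≤ d := hd.two_le
  set f : (ZMod d)[X] := X ^ d - (X ^ (d - 1) + 1) with hf
  have hmonic : f.Monic := by
    apply monic_X_pow_sub
    have h1 : (X ^ (d - 1) + 1 : (ZMod d)[X]).degree ≤ (d - 1 : ℕ) := by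
      apply le_trans (degree_add_le _ _)
      simp [degree_X_pow, degree_one]
    refine lt_of_le_of_lt h1 ?_
    exact_mod_cast Nat.sub_lt (by omega) one_pos
  have hndeg : f.natDegree = d := by
    rw [hf]
    rw [natDegree_sub_eq_left_of_natDegree_lt]
    · exact natDegree_X_pow d
    · rw [natDegree_X_pow]
      have : (X ^ (d - 1) + 1 : (ZMod d)[X]).natDegree ≤ d - 1 := by
        apply le_trans (natDegree_add_le _ _)
        simp [natDegree_X_pow]
      omega
  set A := AdjoinRoot f with hA
  set r : A := AdjoinRoot.root f with hr'
  have hr : r ^ d = r ^ (d - 1) + 1 := by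
    have h0 : (AdjoinRoot.mk f) f = 0 := AdjoinRoot.mk_self
    rw [hf] at h0
    rw [map_sub, map_add, map_pow, map_pow, AdjoinRoot.mk_X, map_one, sub_eq_zero] at h0
    exact h0
  set w : A := r ^ (d - 1) - r ^ (d - 2) with hw'
  have hw : r * w = 1 := by
    rw [hw', mul_sub, ← pow_succ', ← pow_succ']
    have e1 : d - 1 + 1 = d := by omega
    have e2 : d - 2 + 1 = d - 1 := by omega
    rw [e1, e2, hr]
    ring
  haveI : Nontrivial A := by
    apply AdjoinRoot.nontrivial
    rw [Polynomial.degree_eq_natDegree hmonic.ne_zero, hndeg]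
    exact_mod_cast Nat.cast_ne_zero.mpr (by omega)
  haveI : CharP A d := charP_of_injective_algebraMap' (A := A) (ZMod d) d
  -- w ^ d = 1 - w
  have e1 : r ^ d * w ^ d = 1 := by rw [← mul_pow, hw, one_pow]
  have e2 : r ^ (d - 1) * w ^ d = w := by
    have hwd : w ^ d = w ^ (d - 1) * w := by
      rw [← pow_succ]
      congr 1
      omega
    rw [hwd, ← mul_assoc, ← mul_pow, hw, one_pow, one_mul]
  have e3 : w ^ d = 1 - w := by
    have h := e1
    rw [hr, add_mul, one_mul, e2] at h
    linear_combination h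
  have hw3 : w ^ d ^ 2 = w := by
    have : w ^ d ^ 2 = (w ^ d) ^ d := by rw [← pow_mul, pow_two]
    rw [this, e3, sub_pow_char, one_pow, e3]
    ring
  have hd2pos : 1 ≤ d ^ 2 := Nat.one_le_pow _ _ hd.pos
  have hww : w ^ (d ^ 2 - 1) = 1 := by
    have h4 : w ^ (d ^ 2 - 1) * (w * r) = w * r := by
      rw [← mul_assoc, ← pow_succ, Nat.sub_add_cancel hd2pos, hw3]
    rw [mul_comm w r, hw, mul_one] at h4
    exact h4
  have hr2 : r ^ (d ^ 2 - 1) = 1 := by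
    calc r ^ (d ^ 2 - 1) = r ^ (d ^ 2 - 1) * w ^ (d ^ 2 - 1) := by rw [hww, mul_one]
    _ = (r * w) ^ (d ^ 2 - 1) := (mul_pow _ _ _).symm
    _ = 1 := by rw [hw, one_pow]
  -- the linear functional reading off the sequence
  set pb := AdjoinRoot.powerBasis' hmonic with hpb
  set b := pb.basis with hb
  set L : A → ZMod d := fun a => ∑ i : Fin pb.dim, b.repr a i * seqv d x i with hL
  have Ladd : ∀ a a' : A, L (a + a') = L a + L a' := by
    intro a a'
    simp only [hL, map_add, Finsupp.add_apply, add_mul, Finset.sum_add_distrib]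
  have hdim : pb.dim = d := by
    rw [hpb]
    simp [hndeg]
  have hgen : pb.gen = r := by rw [hpb]; simp [hr']
  have hLpow : ∀ k : ℕ, L (r ^ k) = seqv d x k := by
    intro k
    induction k using Nat.strong_induction_on with
    | _ k ih =>
      by_cases hk : k < d
      · have hk' : k < pb.dim := by omega
        have hbasis : r ^ k = b ⟨k, hk'⟩ := by
          rw [hb, PowerBasis.coe_basis, hgen]
        rw [hbasis, hL]
        simp only [Module.Basis.repr_self]
        rw [Finset.sum_eq_single (⟨k, hk'⟩ : Fin pb.dim)]
        · simp
        · intro i _ hi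
          rw [Finsupp.single_apply, if_neg (fun h => hi h.symm), zero_mul]
        · intro h
          exact absurd (Finset.mem_univ _) h
      · push_neg at hk
        have hrk : r ^ k = r ^ (k - 1) + r ^ (k - d) := by
          have h1 : r ^ k = r ^ (k - d) * r ^ d := by
            rw [← pow_add]
            congr 1
            omega
          rw [h1, hr, mul_add, mul_one, ← pow_add]
          have : k - d + (d - 1) = k - 1 := by omega
          rw [this]
        rw [hrk, Ladd, ih (k - 1) (by omega), ih (k - d) (by omega),
          seqv_ge x (by omega) hk]
  have hkey : r ^ (d ^ 2 - 1 + k) = r ^ k := by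
    rw [pow_add, hr2, one_mul]
  rw [← hLpow, hkey, hLpow]

theorem stmt_16 (d : ℕ) (hd : d.Prime) :
    ∀ x : ZMod d → ZMod d, network d (d ^ 2 - 1) x = fun j => x (j + 1) := by
  haveI : NeZero d := ⟨hd.pos.ne'⟩
  intro x
  funext j
  rw [network_eq_seqv]
  have hcast : ((d ^ 2 - 1 : ℕ) : ZMod d) = -1 := by
    have h1 : 1 ≤ d ^ 2 := Nat.one_le_pow _ _ hd.pos
    rw [Nat.cast_sub h1, Nat.cast_pow, ZMod.natCast_self]
    ring
  rw [hcast]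
  have e1 : j - 1 - (-1 : ZMod d) = j := by ring
  rw [e1]
  rw [seqv_period d hd x j.val, seqv_lt x (ZMod.val_lt j), ZMod.natCast_rightInverse j]
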